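/- Let f have coordinate-wise Lipschitz gradient with constant L_i along e_i, let x ∈ [l,u], and suppose f(x + α e_i) > f(x) − γα² for some α > 0 with x + α e_i ∈ [l,u]. Then −∇_i f(x) < (γ + L_i) α. -/

import Mathlib

/-- The box `[l, u]` in `ℝⁿ`. -/
def Box {n : ℕ} (l u : EuclideanSpace ℝ (Fin n)) : Set (EuclideanSpace ℝ (Fin n)) :=
  {y | ∀ j, l j ≤ y j ∧ y j ≤ u j}

theorem stmt14 {n : ℕ} (f : EuclideanSpace ℝ (Fin n) → ℝ)
    (g : EuclideanSpace ℝ (Fin n) → EuclideanSpace ℝ (Fin n))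
    (l u x : EuclideanSpace ℝ (Fin n)) (i : Fin n) (Li γ α : ℝ)
    (hLi : 0 < Li) (hγ : 0 < γ) (hα : 0 < α)
    (hgrad : ∀ y ∈ Box l u, HasGradientAt f (g y) y)
    (hlip : ∀ y : EuclideanSpace ℝ (Fin n), ∀ s : ℝ, y ∈ Box l u →
      y + s • EuclideanSpace.single i (1:ℝ) ∈ Box l u →
      |g (y + s • EuclideanSpace.single i (1:ℝ)) i - g y i| ≤ Li * |s|)
    (hx : x ∈ Box l u) (hfeas : x + α • EuclideanSpace.single i (1:ℝ) ∈ Box l u)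
    (hfail : f (x + α • EuclideanSpace.single i (1:ℝ)) > f x - γ * α ^ 2) :
    -(g x i) < (γ + Li) * α := by
  set e : EuclideanSpace ℝ (Fin n) := EuclideanSpace.single i (1:ℝ) with he
  -- membership of intermediate points
  have hmem : ∀ s : ℝ, 0 ≤ s → s ≤ α → x + s • e ∈ Box l u := by
    intro s hs0 hsα j
    have h1 := hx j
    have h2 := hfeas j
    have happ : ∀ t : ℝ, (x + t • e) j = x j + t * (if j = i then (1:ℝ) else 0) := by
      intro t
      simp [he, EuclideanSpace.single_apply]
    rw [happ] at h2 ⊢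
    by_cases hji : j = i
    · simp only [hji, if_pos rfl, ↓reduceIte, mul_one] at h2 ⊢
      constructor
      · nlinarith [hji ▸ h1.1]
      · nlinarith [h2.2]
    · simp only [if_neg hji, mul_zero, add_zero] at h2 ⊢
      exact h1
  -- derivative of φ s = f (x + s • e)
  have hderiv : ∀ s : ℝ, 0 ≤ s → s ≤ α →
      HasDerivAt (fun t : ℝ => f (x + t • e)) (g (x + s • e) i) s := by
    intro s hs0 hsα
    have hy := hmem s hs0 hsα
    have hf : HasFDerivAt f (InnerProductSpace.toDual ℝ _ (g (x + s • e))) (x + s • e) :=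
      (hasGradientAt_iff_hasFDerivAt).mp (hgrad _ hy)
    have hc : HasDerivAt (fun t : ℝ => x + t • e) e s := by
      simpa using ((hasDerivAt_id s).smul_const e).const_add x
    have := hf.comp_hasDerivAt s hc
    have hinner : (InnerProductSpace.toDual ℝ _ (g (x + s • e))) e = g (x + s • e) i := by
      simp [he, InnerProductSpace.toDual_apply_apply, EuclideanSpace.inner_single_right]
    rwa [hinner] at this
  -- MVT
  have hcont : ContinuousOn (fun t : ℝ => f (x + t • e)) (Set.Icc 0 α) := by
    intro s hs
    exact ((hderiv s hs.1 hs.2).continuousAt).continuousWithinAt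
  have hdiff : ∀ s ∈ Set.Ioo (0:ℝ) α,
      HasDerivAt (fun t : ℝ => f (x + t • e)) (g (x + s • e) i) s :=
    fun s hs => hderiv s hs.1.le hs.2.le
  obtain ⟨c, hc, hceq⟩ := exists_hasDerivAt_eq_slope (fun t : ℝ => f (x + t • e))
    (fun s => g (x + (s : ℝ) • e) i) hα hcont hdiff
  -- Lipschitz bound at c
  have hlipc := hlip x c hx (hmem c hc.1.le hc.2.le)
  have habs : |g (x + c • e) i - g x i| ≤ Li * α := by
    calc |g (x + c • e) i - g x i| ≤ Li * |c| := hlipc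
    _ ≤ Li * α := by
        rw [abs_of_nonneg hc.1.le]
        exact mul_le_mul_of_nonneg_left hc.2.le hLi.le
  have hzero : (fun t : ℝ => f (x + t • e)) 0 = f x := by simp
  have hslope : g (x + c • e) i = (f (x + α • e) - f x) / α := by
    rw [hceq]; norm_num
  have hgi : g (x + c • e) i > -γ * α := by
    rw [hslope]
    rw [gt_iff_lt, lt_div_iff₀ hα]
    nlinarith [hfail]
  have hlow : g x i ≥ g (x + c • e) i - Li * α := by
    have := (abs_le.mp habs).2
    linarith
  nlinarith
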